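/- Let Q be the Steiner quadruple system of weight-4 codewords of the extended Hamming code of length n. Let C⁰ and C² be the sets of 6-subsets of {1,…,n} containing respectively 0 and 3 blocks of Q. Then no vertex of C⁰ is adjacent in the Johnson graph J(n,6) to a vertex of C² (i.e., |x ∩ y| ≤ 4 for x ∈ C⁰, y ∈ C²). -/
import Mathlib


/-- Let `Q` be the Steiner quadruple system of the extended Hamming code
(a 3-(n,4,1) design closed under symmetric difference of blocks meeting in 2 points).
If the 6-subset `x` contains no block of `Q` and the 6-subset `y` contains 3 blocks of
`Q`, then `x` and `y` are not adjacent in the Johnson graph `J(n,6)`,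
i.e. `|x ∩ y| ≤ 4`. -/
theorem stmt6 (n : ℕ) (Q : Set (Finset (Fin n)))
    (hQ4 : ∀ B ∈ Q, B.card = 4)
    (hSQS : ∀ s : Finset (Fin n), s.card = 3 → ∃! B, B ∈ Q ∧ s ⊆ B)
    (hclosed : ∀ B ∈ Q, ∀ B' ∈ Q, (B ∩ B').card = 2 → symmDiff B B' ∈ Q)
    (x y : Finset (Fin n)) (hx6 : x.card = 6) (hy6 : y.card = 6)
    (hx0 : {B ∈ Q | B ⊆ x}.ncard = 0)
    (hy3 : {B ∈ Q | B ⊆ y}.ncard = 3) :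
    (x ∩ y).card ≤ 4 := by
  by_contra hcon
  push_neg at hcon
  -- x contains no block at all
  have hxempty : {B ∈ Q | B ⊆ x} = ∅ :=
    (Set.ncard_eq_zero (Set.toFinite _)).mp hx0
  have hnoblk : ∀ B ∈ Q, ¬ B ⊆ x := by
    intro B hB hBx
    have : B ∈ ({B ∈ Q | B ⊆ x} : Set (Finset (Fin n))) := ⟨hB, hBx⟩
    simp [hxempty] at this
  -- get two distinct blocks inside y
  have h2 : 1 < {B ∈ Q | B ⊆ y}.ncard := by omega
  obtain ⟨B1, B2, hB1, hB2, hne⟩ := (Set.one_lt_ncard_iff (Set.toFinite _)).mp h2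
  obtain ⟨hB1Q, hB1y⟩ := hB1
  obtain ⟨hB2Q, hB2y⟩ := hB2
  -- intersection has card exactly 2
  have hc1 := hQ4 B1 hB1Q
  have hc2 := hQ4 B2 hB2Q
  have hunion : (B1 ∪ B2).card ≤ 6 := by
    calc (B1 ∪ B2).card ≤ y.card := Finset.card_le_card (Finset.union_subset hB1y hB2y)
    _ = 6 := hy6
  have hiu : (B1 ∪ B2).card + (B1 ∩ B2).card = 4 + 4 := by
    rw [Finset.card_union_add_card_inter, hc1, hc2]
  have hge2 : 2 ≤ (B1 ∩ B2).card := by omega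
  have hle2 : (B1 ∩ B2).card ≤ 2 := by
    by_contra hlt
    push_neg at hlt
    obtain ⟨s, hs, hscard⟩ := Finset.exists_subset_card_eq (show 3 ≤ (B1 ∩ B2).card by omega) (s := B1 ∩ B2)
    obtain ⟨B, hB, huniq⟩ := hSQS s hscard
    have e1 : B1 = B := huniq B1 ⟨hB1Q, hs.trans Finset.inter_subset_left⟩
    have e2 : B2 = B := huniq B2 ⟨hB2Q, hs.trans Finset.inter_subset_right⟩
    exact hne (e1.trans e2.symm)
  have hint2 : (B1 ∩ B2).card = 2 := le_antisymm hle2 hge2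
  -- third block
  have hB3Q : symmDiff B1 B2 ∈ Q := hclosed B1 hB1Q B2 hB2Q hint2
  have hB3y : symmDiff B1 B2 ⊆ y := by
    intro a ha
    rw [Finset.mem_symmDiff] at ha
    rcases ha with ⟨h, _⟩ | ⟨h, _⟩
    · exact hB1y h
    · exact hB2y h
  -- y \ x has at most one element
  have hsd : (y \ x).card ≤ 1 := by
    have := Finset.card_sdiff_add_card_inter y x
    rw [Finset.inter_comm] at this
    omega
  obtain ⟨q, hq⟩ := Finset.card_pos.mp (show 0 < y.card by omega)
  haveI : Nonempty (Fin n) := ⟨q⟩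
  rcases Finset.card_le_one_iff_subset_singleton.mp hsd with ⟨p, hp⟩
  -- choose a block avoiding p
  have key : ∃ B ∈ Q, B ⊆ y ∧ p ∉ B := by
    by_cases h1 : p ∈ B1
    · by_cases h2' : p ∈ B2
      · refine ⟨symmDiff B1 B2, hB3Q, hB3y, ?_⟩
        rw [Finset.mem_symmDiff]
        tauto
      · exact ⟨B2, hB2Q, hB2y, h2'⟩
    · exact ⟨B1, hB1Q, hB1y, h1⟩
  obtain ⟨B, hBQ, hBy, hpB⟩ := key
  refine hnoblk B hBQ fun a ha => ?_
  by_contra hax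
  have : a ∈ y \ x := Finset.mem_sdiff.mpr ⟨hBy ha, hax⟩
  have := hp this
  simp at this
  exact hpB (this ▸ ha)
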